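/- The generating series f_m(x) = Σ_{n≥1} b_{m,n} x^n counting planar binary rooted trees with n leaves whose internal vertices are colored by {*_0,...,*_m} such that for every internal vertex v with color *_i, the left child of v (if internal) has color *_j with j > i, satisfies f_m(x) = x · (1 + f_m(x))^{m+1}; consequently b_{m,n} = (1/(mn+1))·binomial((m+1)n, n) for all n ≥ 1. -/

import Mathlib

/-- Planar binary rooted trees with internal vertices colored by natural numbers. -/
inductive CTree : Type
  | leaf : CTree
  | node : ℕ → CTree → CTree → CTree

/-- Number of leaves of a colored tree. -/
def CTree.leaves : CTree → ℕ
  | .leaf => 1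
  | .node _ l r => l.leaves + r.leaves

/-- The left-child condition: a tree is a leaf or its root color exceeds `i`. -/
def CTree.leftOK (i : ℕ) : CTree → Prop
  | .leaf => True
  | .node j _ _ => i < j

/-- Trees colored by `{0,…,m}` such that at every internal vertex with color `i`,
the left child is a leaf or has root color `j > i`. -/
def CTree.Good (m : ℕ) : CTree → Prop
  | .leaf => True
  | .node i l r => i ≤ m ∧ CTree.leftOK i l ∧ l.Good m ∧ r.Good m

/-- `b m n`: the number of good colored trees with `n` leaves. -/
noncomputable def bCount (m n : ℕ) : ℕ := Nat.card {t : CTree // t.Good m ∧ t.leaves = n}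

namespace CTree

/-- refined predicate: good and root color (if a node) is at least `i`. -/
def Good' (m i : ℕ) : CTree → Prop
  | .leaf => True
  | .node j l r => i ≤ j ∧ j ≤ m ∧ Good' m (j+1) l ∧ Good' m 0 r

def CBound (m : ℕ) : CTree → Prop
  | .leaf => True
  | .node j l r => j ≤ m ∧ CBound m l ∧ CBound m r

lemma leaves_pos : ∀ t : CTree, 1 ≤ t.leaves
  | .leaf => le_refl 1
  | .node _ l r => le_trans (leaves_pos l) (Nat.le_add_right _ _)

lemma good'_mono {m i j : ℕ} (hij : i ≤ j) : ∀ {t : CTree}, Good' m j t → Good' m i t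
  | .leaf, _ => trivial
  | .node _ _ _, h => ⟨le_trans hij h.1, h.2⟩

lemma good'_succ_iff (m j : ℕ) : ∀ l : CTree, Good' m (j+1) l ↔ (leftOK j l ∧ Good' m 0 l)
  | .leaf => by simp [Good', leftOK]
  | .node c a b => by
      simp only [Good', leftOK]
      constructor
      · rintro ⟨h1, h2⟩; exact ⟨h1, Nat.zero_le _, h2⟩
      · rintro ⟨h1, _, h2⟩; exact ⟨h1, h2⟩

lemma good_iff_good' (m : ℕ) : ∀ t : CTree, (Good m t ↔ Good' m 0 t)
  | .leaf => Iff.rfl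
  | .node j l r => by
      simp only [Good, Good', good'_succ_iff, good_iff_good' m l, good_iff_good' m r]
      have h0 : 0 ≤ j := Nat.zero_le j
      tauto

lemma cBound_of_good' {m : ℕ} : ∀ {i : ℕ} {t : CTree}, Good' m i t → CBound m t
  | _, .leaf, _ => trivial
  | _, .node _ _ _, h => ⟨h.2.1, cBound_of_good' h.2.2.1, cBound_of_good' h.2.2.2⟩

lemma finite_cBound (m : ℕ) : ∀ n, {t : CTree | CBound m t ∧ t.leaves = n}.Finite := by
  intro n
  induction n using Nat.strong_induction_on with
  | _ n ih =>
    apply Set.Finite.subset (s := ({CTree.leaf} : Set CTree) ∪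
      ⋃ p ∈ Finset.Ico 1 n, (fun x : ℕ × CTree × CTree => CTree.node x.1 x.2.1 x.2.2) ''
        ((Set.Iic m) ×ˢ ({t : CTree | CBound m t ∧ t.leaves = p} ×ˢ
          {t : CTree | CBound m t ∧ t.leaves = n - p})))
    · apply Set.Finite.union (Set.finite_singleton _)
      apply Set.Finite.biUnion (Finset.Ico 1 n).finite_toSet
      intro p hp
      simp only [Finset.coe_Ico, Set.mem_Ico] at hp
      exact Set.Finite.image _ ((Set.finite_Iic m).prod
        ((ih p (by omega)).prod (ih (n - p) (by omega))))
    · rintro t ⟨hb, hn⟩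
      cases t with
      | leaf => exact Or.inl rfl
      | node j l r =>
        refine Or.inr ?_
        have hl1 := leaves_pos l
        have hr1 := leaves_pos r
        simp only [leaves] at hn
        refine Set.mem_biUnion (s := (Finset.Ico 1 n : Set ℕ))
          (show l.leaves ∈ (Finset.Ico 1 n : Set ℕ) by
            simp only [Finset.coe_Ico, Set.mem_Ico]; omega)
          ⟨(j, l, r), ⟨hb.1, ⟨hb.2.1, rfl⟩, ⟨hb.2.2, show r.leaves = n - l.leaves by omega⟩⟩, rfl⟩

lemma finiteGT (m i n : ℕ) : Finite {t : CTree // Good' m i t ∧ t.leaves = n} := by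
  have h : {t : CTree | Good' m i t ∧ t.leaves = n}.Finite :=
    (finite_cBound m n).subset (fun t ht => ⟨cBound_of_good' ht.1, ht.2⟩)
  exact h.to_subtype

noncomputable def bG (m i n : ℕ) : ℕ := Nat.card {t : CTree // Good' m i t ∧ t.leaves = n}

lemma bCount_eq_bG (m n : ℕ) : bCount m n = bG m 0 n :=
  Nat.card_congr (Equiv.subtypeEquivRight fun t =>
    and_congr_left' (good_iff_good' m t))

lemma bG_zero (m i : ℕ) : bG m i 0 = 0 := by
  have : IsEmpty {t : CTree // Good' m i t ∧ t.leaves = 0} := by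
    constructor; rintro ⟨t, _, ht⟩; have := leaves_pos t; omega
  exact Nat.card_of_isEmpty

lemma bG_top (m n : ℕ) : bG m (m+1) n = if n = 1 then 1 else 0 := by
  have hleaf : ∀ t : CTree, Good' m (m+1) t → t = .leaf := by
    rintro (_ | ⟨j, l, r⟩) h
    · rfl
    · exact absurd h (by simp [Good']; omega)
  by_cases hn : n = 1
  · subst hn
    simp only [if_pos rfl]
    have : Unique {t : CTree // Good' m (m+1) t ∧ t.leaves = 1} := by
      refine ⟨⟨⟨.leaf, trivial, rfl⟩⟩, ?_⟩
      rintro ⟨t, h, _⟩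
      exact Subtype.ext (hleaf t h)
    exact Nat.card_unique
  · rw [if_neg hn]
    have : IsEmpty {t : CTree // Good' m (m+1) t ∧ t.leaves = n} := by
      constructor; rintro ⟨t, h, ht⟩
      rw [hleaf t h] at ht; exact hn ht.symm
    exact Nat.card_of_isEmpty

/-- The decomposition equivalence. -/
noncomputable def decompEquiv (m i n : ℕ) (him : i ≤ m) :
    ({t : CTree // Good' m (i+1) t ∧ t.leaves = n} ⊕
      {lr : CTree × CTree // (Good' m (i+1) lr.1 ∧ Good' m 0 lr.2) ∧
        lr.1.leaves + lr.2.leaves = n}) ≃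
    {t : CTree // Good' m i t ∧ t.leaves = n} := by
  apply Equiv.ofBijective (f := fun x => match x with
    | Sum.inl ⟨t, h⟩ => ⟨t, good'_mono (Nat.le_succ i) h.1, h.2⟩
    | Sum.inr ⟨(l, r), h⟩ => ⟨.node i l r, ⟨le_refl i, him, h.1.1, h.1.2⟩, h.2⟩)
  constructor
  · rintro (⟨t₁, h₁⟩ | ⟨⟨l₁, r₁⟩, h₁⟩) (⟨t₂, h₂⟩ | ⟨⟨l₂, r₂⟩, h₂⟩) h <;>
      simp only [Subtype.mk.injEq] at h
    · exact congrArg _ (Subtype.ext h)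
    · exfalso; rw [h] at h₁; exact absurd h₁.1.1 (by simp [Good'])
    · exfalso; rw [← h] at h₂; exact absurd h₂.1.1 (by simp [Good'])
    · obtain ⟨-, h2, h3⟩ := CTree.node.inj h
      subst h2; subst h3; rfl
  · rintro ⟨t, ht, hn⟩
    cases t with
    | leaf => exact ⟨Sum.inl ⟨.leaf, trivial, hn⟩, rfl⟩
    | node j l r =>
      rcases Nat.lt_or_ge i j with hij | hij
      · exact ⟨Sum.inl ⟨.node j l r, ⟨hij, ht.2⟩, hn⟩, rfl⟩
      · have hji : j = i := le_antisymm hij ht.1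
        subst hji
        exact ⟨Sum.inr ⟨(l, r), ⟨ht.2.2.1, ht.2.2.2⟩, hn⟩, rfl⟩

noncomputable def pairEquiv (P Q : CTree → Prop) (n : ℕ) :
    (Σ pq : (Finset.HasAntidiagonal.antidiagonal n : Finset (ℕ × ℕ)),
      {l : CTree // P l ∧ l.leaves = pq.1.1} × {r : CTree // Q r ∧ r.leaves = pq.1.2}) ≃
    {lr : CTree × CTree // (P lr.1 ∧ Q lr.2) ∧ lr.1.leaves + lr.2.leaves = n} := by
  apply Equiv.ofBijective (f := fun x =>
    ⟨(x.2.1.1, x.2.2.1), ⟨x.2.1.2.1, x.2.2.2.1⟩, by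
      have h1 := x.2.1.2.2; have h2 := x.2.2.2.2
      have h3 := Finset.HasAntidiagonal.mem_antidiagonal.mp x.1.2
      simp only [h1, h2]; exact h3⟩)
  constructor
  · rintro ⟨⟨⟨p₁, q₁⟩, hpq₁⟩, ⟨l₁, hl₁⟩, ⟨r₁, hr₁⟩⟩ ⟨⟨⟨p₂, q₂⟩, hpq₂⟩, ⟨l₂, hl₂⟩, ⟨r₂, hr₂⟩⟩ h
    simp only [Subtype.mk.injEq, Prod.mk.injEq] at h
    obtain ⟨hl, hr⟩ := h
    have hp : p₁ = p₂ := by rw [← hl] at hl₂; exact hl₁.2.symm.trans hl₂.2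
    have hq : q₁ = q₂ := by rw [← hr] at hr₂; exact hr₁.2.symm.trans hr₂.2
    subst hp; subst hq; subst hl; subst hr
    rfl
  · rintro ⟨⟨l, r⟩, ⟨hP, hQ⟩, hn⟩
    exact ⟨⟨⟨(l.leaves, r.leaves), Finset.HasAntidiagonal.mem_antidiagonal.mpr hn⟩,
      ⟨l, hP, rfl⟩, ⟨r, hQ, rfl⟩⟩, rfl⟩

lemma bG_rec (m i n : ℕ) (him : i ≤ m) :
    bG m i n = bG m (i+1) n +
      ∑ pq ∈ Finset.HasAntidiagonal.antidiagonal n, bG m (i+1) pq.1 * bG m 0 pq.2 := by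
  haveI := finiteGT m i n
  haveI := finiteGT m (i+1) n
  haveI I1 : ∀ j p : ℕ, Fintype {l : CTree // Good' m j l ∧ l.leaves = p} := fun j p => by
    haveI := finiteGT m j p
    exact Fintype.ofFinite _
  haveI hfin2 : Finite {lr : CTree × CTree //
      (Good' m (i+1) lr.1 ∧ Good' m 0 lr.2) ∧ lr.1.leaves + lr.2.leaves = n} :=
    Finite.of_equiv _ (pairEquiv _ _ n)
  rw [bG, ← Nat.card_congr (decompEquiv m i n him), Nat.card_sum]
  congr 1
  rw [← Nat.card_congr (pairEquiv (Good' m (i+1)) (Good' m 0) n)]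
  rw [Nat.card_eq_fintype_card, Fintype.card_sigma]
  rw [← Finset.sum_coe_sort (Finset.HasAntidiagonal.antidiagonal n)]
  refine Finset.sum_congr rfl fun pq _ => ?_
  rw [Fintype.card_prod, bG, bG, Nat.card_eq_fintype_card, Nat.card_eq_fintype_card]


open PowerSeries in
noncomputable def F (m i : ℕ) : PowerSeries ℚ := PowerSeries.mk fun n => (bG m i n : ℚ)

lemma F_top (m : ℕ) : F m (m+1) = PowerSeries.X := by
  ext n
  rw [F, PowerSeries.coeff_mk, PowerSeries.coeff_X, bG_top]
  split_ifs <;> simp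

lemma F_rec (m i : ℕ) (him : i ≤ m) : F m i = F m (i+1) + F m (i+1) * F m 0 := by
  ext n
  rw [map_add, PowerSeries.coeff_mul]
  simp only [F, PowerSeries.coeff_mk]
  rw [bG_rec m i n him]
  push_cast
  rfl

lemma F_eq (m : ℕ) : ∀ k, k ≤ m+1 → F m (m+1-k) = PowerSeries.X * (1 + F m 0)^k
  | 0, _ => by simpa using F_top m
  | (k+1), hk => by
      have h1 : m+1-(k+1) ≤ m := by omega
      have h2 : m+1-(k+1)+1 = m+1-k := by omega
      rw [F_rec m _ h1, h2, F_eq m k (by omega)]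
      ring

lemma main1 (m : ℕ) : F m 0 = PowerSeries.X * (1 + F m 0)^(m+1) := by
  simpa using F_eq m (m+1) le_rfl

lemma coeff_hpow (m n r : ℕ) :
    PowerSeries.coeff n ((1 + F m 0)^r) = ∑ k ∈ Finset.range (r+1),
      (if k ≤ n then PowerSeries.coeff (n-k) ((1 + F m 0)^((m+1)*k)) else 0)
        * (r.choose k : ℚ) := by
  conv_lhs => rw [show (1 + F m 0 : PowerSeries ℚ)
    = 1 + PowerSeries.X * (1 + F m 0)^(m+1) by rw [← main1]]
  rw [add_comm (1 : PowerSeries ℚ) _, add_pow, map_sum]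
  apply Finset.sum_congr rfl
  intro k _
  rw [one_pow, mul_one, mul_pow, ← pow_mul,
    show ((r.choose k : ℕ) : PowerSeries ℚ) = PowerSeries.C (r.choose k : ℚ) by
      rw [← map_natCast (PowerSeries.C) (r.choose k)],
    PowerSeries.coeff_mul_C, PowerSeries.coeff_X_pow_mul']

lemma vand (s M n' : ℕ) :
    ∑ i ∈ Finset.range (s+1), (if i ≤ n' then Nat.choose s i * Nat.choose M (n'-i) else 0)
      = (s+M).choose n' := by
  rw [Nat.add_choose_eq, Finset.Nat.sum_antidiagonal_eq_sum_range_succ_mk]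
  rw [show ∑ k ∈ Finset.range (n'+1), s.choose k * M.choose (n'-k)
      = ∑ k ∈ Finset.range (n'+1), (if k ≤ n' then s.choose k * M.choose (n'-k) else 0) from
    Finset.sum_congr rfl fun x hx => (if_pos (by
      simp only [Finset.mem_range] at hx; omega)).symm]
  rw [show ∑ k ∈ Finset.range (n'+1), (if k ≤ n' then s.choose k * M.choose (n'-k) else 0)
      = ∑ k ∈ Finset.range (s+n'+2), (if k ≤ n' then s.choose k * M.choose (n'-k) else 0) from
    Finset.sum_subset (Finset.range_subset_range.mpr (by omega))
      (fun x _ hx => if_neg (by simp only [Finset.mem_range] at hx; omega))]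
  exact Finset.sum_subset (Finset.range_subset_range.mpr (by omega))
    (fun x _ hx => by
      simp only [Finset.mem_range, not_lt] at hx
      have : s.choose x = 0 := Nat.choose_eq_zero_of_lt (by omega)
      simp [this])

lemma sumkey (M n s : ℕ) (hn : 1 ≤ n) :
    ∑ k ∈ Finset.range (s+2), (if k ≤ n then k * M.choose (n-k) else 0) * ((s+1).choose k)
      = (s+1) * (M + s).choose (n-1) := by
  rw [Finset.sum_range_succ']
  have h0 : (if 0 ≤ n then 0 * M.choose (n-0) else 0) * ((s+1).choose 0) = 0 := by simp
  rw [h0, add_zero]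
  have term : ∀ i, (if i+1 ≤ n then (i+1) * M.choose (n-(i+1)) else 0) * ((s+1).choose (i+1))
      = (s+1) * (if i ≤ n-1 then s.choose i * M.choose ((n-1)-i) else 0) := by
    intro i
    by_cases h : i + 1 ≤ n
    · rw [if_pos h, if_pos (by omega)]
      have h2 : n - (i+1) = (n-1) - i := by omega
      rw [h2]
      calc (i+1) * M.choose ((n-1)-i) * ((s+1).choose (i+1))
          = ((s+1).choose (i+1) * (i+1)) * M.choose ((n-1)-i) := by ring
        _ = ((s+1) * s.choose i) * M.choose ((n-1)-i) := by
            rw [← Nat.add_one_mul_choose_eq]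
        _ = (s+1) * (s.choose i * M.choose ((n-1)-i)) := by ring
    · rw [if_neg h, if_neg (by omega), zero_mul, mul_zero]
  rw [Finset.sum_congr rfl (fun i _ => term i), ← Finset.mul_sum, vand s M (n-1),
    Nat.add_comm s M]

lemma raney (m : ℕ) : ∀ n r : ℕ,
    (((m+1)*n + r : ℕ) : ℚ) * PowerSeries.coeff n ((1 + F m 0)^r)
      = (r : ℚ) * ((((m+1)*n + r).choose n : ℕ) : ℚ) := by
  intro n
  induction n using Nat.strong_induction_on with
  | _ n ih =>
    intro r
    rcases Nat.eq_zero_or_pos n with hn | hn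
    · subst hn
      have hc : PowerSeries.constantCoeff (1 + F m 0) = 1 := by
        rw [map_add, map_one]
        have : PowerSeries.constantCoeff (F m 0) = (bG m 0 0 : ℚ) := by
          rw [F, ← PowerSeries.coeff_zero_eq_constantCoeff_apply, PowerSeries.coeff_mk]
        rw [this, bG_zero]
        norm_num
      rw [PowerSeries.coeff_zero_eq_constantCoeff_apply, map_pow, hc, one_pow]
      simp
    · rcases Nat.eq_zero_or_pos r with hr | hr
      · subst hr
        rw [pow_zero, PowerSeries.coeff_one, if_neg (by omega)]
        simp
      · obtain ⟨s, rfl⟩ : ∃ s, r = s + 1 := ⟨r - 1, by omega⟩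
        apply mul_left_cancel₀ (show ((n:ℕ):ℚ) ≠ 0 from Nat.cast_ne_zero.mpr (by omega))
        rw [coeff_hpow]
        have e : ∀ k ∈ Finset.range (s+2), (n:ℚ) *
            ((if k ≤ n then PowerSeries.coeff (n-k) ((1 + F m 0)^((m+1)*k)) else 0)
              * ((s+1).choose k : ℚ))
            = (((if k ≤ n then k * (((m+1)*n).choose (n-k)) else 0) * ((s+1).choose k) : ℕ) : ℚ) := by
          intro k _
          by_cases hkn : k ≤ n
          · rw [if_pos hkn, if_pos hkn]
            have hc : (n:ℚ) * PowerSeries.coeff (n-k) ((1 + F m 0)^((m+1)*k))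
                = ((k * ((m+1)*n).choose (n-k) : ℕ) : ℚ) := by
              rcases Nat.eq_zero_or_pos k with hk0 | hk0
              · subst hk0
                rw [Nat.mul_zero, pow_zero, PowerSeries.coeff_one, if_neg (by omega)]
                simp
              · have hlt : n - k < n := by omega
                have hIH := ih (n-k) hlt ((m+1)*k)
                have hNn : (m+1)*(n-k) + (m+1)*k = (m+1)*n := by
                  rw [← Nat.mul_add]
                  congr 1
                  omega
                rw [hNn] at hIH
                apply mul_left_cancel₀ (show ((m+1 : ℕ):ℚ) ≠ 0 from
                  Nat.cast_ne_zero.mpr (by omega))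
                push_cast at hIH ⊢
                linear_combination hIH
            push_cast at hc ⊢
            linear_combination ((s+1).choose k : ℚ) * hc
          · rw [if_neg hkn, if_neg hkn]
            simp
        rw [mul_left_comm, Finset.mul_sum, Finset.sum_congr rfl e, ← Nat.cast_sum,
          sumkey ((m+1)*n) n s hn]
        have nat1 : ((m+1)*n + s + 1) * (((m+1)*n + s).choose (n-1))
            = (((m+1)*n + (s+1)).choose n) * n := by
          have h := Nat.add_one_mul_choose_eq ((m+1)*n + s) (n-1)
          have h2 : n - 1 + 1 = n := by omega
          rw [h2] at h
          rw [h, ← Nat.add_assoc]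
        have nat1' : (((m+1)*n + s + 1 : ℕ):ℚ) * ((((m+1)*n + s).choose (n-1) : ℕ):ℚ)
            = ((((m+1)*n + (s+1)).choose n : ℕ):ℚ) * (n : ℚ) := by exact_mod_cast nat1
        push_cast at nat1' ⊢
        linear_combination (s+1 : ℚ) * nat1'
end CTree

/-- The generating series `f_m(x) = Σ_{n≥1} b_{m,n} xⁿ` satisfies
`f_m = x (1 + f_m)^{m+1}`; consequently `b_{m,n}` is the Fuss–Catalan number
`(1/(mn+1))·choose((m+1)n, n)` for all `n ≥ 1`. -/
theorem colored_trees_fuss_catalan (m : ℕ) :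
    (PowerSeries.mk (fun n => (bCount m n : ℚ))
      = PowerSeries.X * (1 + PowerSeries.mk (fun n => (bCount m n : ℚ))) ^ (m + 1))
    ∧ ∀ n, 1 ≤ n → bCount m n * (m * n + 1) = Nat.choose ((m + 1) * n) n := by
  have hf : PowerSeries.mk (fun n => (bCount m n : ℚ)) = CTree.F m 0 := by
    ext n
    rw [PowerSeries.coeff_mk, CTree.F, PowerSeries.coeff_mk, CTree.bCount_eq_bG]
  constructor
  · rw [hf]; exact CTree.main1 m
  · intro n hn
    have h1 := CTree.raney m n 1
    rw [pow_one] at h1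
    have hcoeff : PowerSeries.coeff n (1 + CTree.F m 0) = (bCount m n : ℚ) := by
      rw [map_add, PowerSeries.coeff_one, if_neg (by omega), CTree.F,
        PowerSeries.coeff_mk, CTree.bCount_eq_bG, zero_add]
    rw [hcoeff] at h1
    have hb : ((m+1)*n + 1) * bCount m n = ((m+1)*n+1).choose n := by
      have := h1
      rw [show ((1:ℕ):ℚ) = 1 from rfl, one_mul] at this
      exact_mod_cast this
    have e2 : ((m+1)*n + 1) * (((m+1)*n).choose (n-1)) = ((m+1)*n+1).choose n * n := by
      have h := Nat.add_one_mul_choose_eq ((m+1)*n) (n-1)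
      have h2 : n - 1 + 1 = n := by omega
      rw [h2] at h
      exact h
    have e3 : ((m+1)*n).choose n * n = ((m+1)*n).choose (n-1) * (m*n+1) := by
      have h := Nat.choose_succ_right_eq ((m+1)*n) (n-1)
      have h2 : n - 1 + 1 = n := by omega
      rw [h2] at h
      have hy : (m+1)*n - (n-1) = m*n+1 := by
        have hmn : (m+1)*n = m*n + n := by ring
        omega
      rw [hy] at h
      exact h
    have key : ((bCount m n * (m*n+1) : ℕ) : ℚ) = ((((m+1)*n).choose n : ℕ) : ℚ) := by
      have hbq : (((m+1)*n + 1 : ℕ):ℚ) * (bCount m n : ℚ)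
          = ((((m+1)*n+1).choose n : ℕ) : ℚ) := by exact_mod_cast hb
      have e2q : (((m+1)*n + 1 :ℕ):ℚ) * ((((m+1)*n).choose (n-1) : ℕ):ℚ)
          = ((((m+1)*n+1).choose n : ℕ) : ℚ) * (n:ℚ) := by exact_mod_cast e2
      have e3q : ((((m+1)*n).choose n : ℕ):ℚ) * (n:ℚ)
          = ((((m+1)*n).choose (n-1) :ℕ):ℚ) * ((m*n+1 : ℕ):ℚ) := by exact_mod_cast e3
      have hn' : (0:ℚ) < (n:ℚ) := by exact_mod_cast hn
      have hne : ((n : ℚ)) * (((m:ℚ)+1)*(n:ℚ) + 1) ≠ 0 :=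
        ne_of_gt (mul_pos hn' (by positivity))
      apply mul_right_cancel₀ hne
      push_cast at hbq e2q e3q ⊢
      linear_combination ((m*(n:ℚ)+1) * (n:ℚ)) * hbq - ((m:ℚ)*n+1) * e2q
        - (((m:ℚ)+1)*n+1) * e3q
    exact_mod_cast key
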